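/- Let p ≥ 3 and k ≥ 1 be integers, let G = G^{2,1}_{p,pk+1}, and let λ' denote the element x(xy)^{(p−1)k+1}x(xy)^{−((p−1)k+1)}(xy)^k x(xy)^{(p−1)k+1}x of G. Then there do not exist a group homomorphism ρ : G → Homeo⁺(ℝ) and a real number α such that ρ(x)α = α, ρ(y)α > α and ρ(λ')α = α. -/

import Mathlib

def X : FreeGroup (Fin 2) := FreeGroup.of 0
def Y : FreeGroup (Fin 2) := FreeGroup.of 1

/-- The relator of the knot group `G^{2,1}_{p,pk+1}`:
`x(xy)^{(p-1)k+1}x = (xy)^{(p-2)k+1}((xy)^k x)^{-(p-2)}(xy)^{(p-1)k+1}`. -/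
def relF (p k : ℤ) : FreeGroup (Fin 2) :=
  X * (X * Y) ^ ((p - 1) * k + 1) * X *
    ((X * Y) ^ ((p - 2) * k + 1) * ((X * Y) ^ k * X) ^ (-(p - 2)) *
      (X * Y) ^ ((p - 1) * k + 1))⁻¹

theorem statement11 (p k : ℤ) (hp : 3 ≤ p) (hk : 1 ≤ k)
    (x y lam : PresentedGroup ({relF p k} : Set (FreeGroup (Fin 2))))
    (hx : x = PresentedGroup.of 0) (hy : y = PresentedGroup.of 1)
    (hlam : lam = x * (x * y) ^ ((p - 1) * k + 1) * x *
      (x * y) ^ (-((p - 1) * k + 1)) * (x * y) ^ k * x *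
      (x * y) ^ ((p - 1) * k + 1) * x) :
    ¬ ∃ (ρ : PresentedGroup ({relF p k} : Set (FreeGroup (Fin 2))) →* (ℝ ≃o ℝ)) (α : ℝ),
        ρ x α = α ∧ α < ρ y α ∧ ρ lam α = α := by
  rintro ⟨ρ, α, hxα, hyα, hlamα⟩
  -- the relation in the presented group
  have hrel : x * (x * y) ^ ((p - 1) * k + 1) * x =
      (x * y) ^ ((p - 2) * k + 1) * ((x * y) ^ k * x) ^ (-(p - 2)) *
        (x * y) ^ ((p - 1) * k + 1) := by
    have h1 : (PresentedGroup.mk ({relF p k} : Set (FreeGroup (Fin 2))) (relF p k)) = 1 :=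
      (QuotientGroup.eq_one_iff _).mpr (Subgroup.subset_normalClosure (Set.mem_singleton _))
    rw [relF] at h1
    simp only [map_mul, map_zpow, map_inv] at h1
    rw [mul_inv_eq_one] at h1
    subst hx hy
    exact h1
  have E0 := congrArg ρ hrel
  simp only [map_mul, map_zpow] at E0
  rw [hlam] at hlamα
  simp only [map_mul, map_zpow] at hlamα
  set G : ℝ ≃o ℝ := ρ x * ρ y with hG
  set N : ℤ := (p - 1) * k + 1 with hN
  set M : ℤ := (p - 2) * k + 1 with hM
  set hh : ℝ ≃o ℝ := G ^ k * ρ x with hhh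
  -- basic positivity facts
  have hN1 : 1 ≤ N := by
    have h0 : 0 < (p - 1) * k := mul_pos (by omega) (by omega)
    omega
  have hGα : α < G α := by
    have h1 := (ρ x).strictMono hyα
    rw [hxα] at h1
    exact h1
  have L1 : ∀ m : ℤ, 1 ≤ m → α < (G ^ m) α := by
    intro m hm
    refine Int.le_induction (motive := fun m _ => α < (G ^ m) α) ?_ ?_ m hm
    · show α < (G ^ (1:ℤ)) α
      rw [zpow_one]; exact hGα
    · intro n hn ih
      have e : G ^ (n + 1) = G ^ n * G := zpow_add_one G n
      calc α < (G ^ n) α := ih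
        _ < (G ^ n) (G α) := (G ^ n).strictMono hGα
        _ = (G ^ (n + 1)) α := by rw [e]; rfl
  have hαβ : α < (G ^ N) α := L1 N hN1
  have hkM : ∀ t : ℝ, (G ^ k) ((G ^ M) t) = (G ^ N) t := by
    intro t
    have e : G ^ k * G ^ M = G ^ N := by
      rw [← zpow_add, show k + M = N from by rw [hM, hN]; ring]
    calc (G ^ k) ((G ^ M) t) = (G ^ k * G ^ M) t := rfl
      _ = (G ^ N) t := by rw [e]
  have hNN : ∀ t : ℝ, (G ^ (-N)) ((G ^ N) t) = t := by
    intro t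
    have e : G ^ (-N) * G ^ N = 1 := by
      rw [← zpow_add, show -N + N = 0 from by ring, zpow_zero]
    calc (G ^ (-N)) ((G ^ N) t) = (G ^ (-N) * G ^ N) t := rfl
      _ = t := by rw [e]; rfl
  have hNN' : ∀ t : ℝ, (G ^ N) ((G ^ (-N)) t) = t := by
    intro t
    have e : G ^ N * G ^ (-N) = 1 := by
      rw [← zpow_add, show N + -N = 0 from by ring, zpow_zero]
    calc (G ^ N) ((G ^ (-N)) t) = (G ^ N * G ^ (-N)) t := rfl
      _ = t := by rw [e]; rfl
  have hnegN : (G ^ (-N)) α < α := by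
    have h1 : (G ^ (-N)) α < (G ^ (-N)) ((G ^ N) α) := (G ^ (-N)).strictMono hαβ
    rw [hNN] at h1
    exact h1
  -- the relation applied at α
  have hPapp : ρ x ((G ^ N) (ρ x α)) = (G ^ M) ((hh ^ (-(p - 2))) ((G ^ N) α)) :=
    DFunLike.congr_fun E0 α
  rw [hxα] at hPapp
  -- unfold lam applied at α
  have hchain : ρ x ((G ^ N) (ρ x ((G ^ (-N)) ((G ^ k) (ρ x ((G ^ N) (ρ x α))))))) = α := hlamα
  rw [hxα, hPapp, hkM, hNN] at hchain
  -- hchain : ρ x ((G^N) (ρ x σ)) = α  where σ = (hh^(-(p-2))) ((G^N) α)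
  have h2 : (G ^ N) (ρ x ((hh ^ (-(p - 2))) ((G ^ N) α))) = α :=
    (ρ x).injective (by rw [hchain, hxα])
  have h3 : ρ x ((hh ^ (-(p - 2))) ((G ^ N) α)) = (G ^ (-N)) α :=
    (G ^ N).injective (by rw [h2, hNN'])
  have hσα : (hh ^ (-(p - 2))) ((G ^ N) α) < α := by
    have h4 : ρ x ((hh ^ (-(p - 2))) ((G ^ N) α)) < ρ x α := by
      rw [h3, hxα]; exact hnegN
    exact (ρ x).lt_iff_lt.mp h4
  have hσβ : (hh ^ (-(p - 2))) ((G ^ N) α) < (G ^ N) α := lt_trans hσα hαβ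
  have hhβ : hh ((G ^ N) α) < (G ^ N) α := by
    calc hh ((G ^ N) α) = (G ^ k) (ρ x ((G ^ N) α)) := rfl
      _ = (G ^ k) ((G ^ M) ((hh ^ (-(p - 2))) ((G ^ N) α))) := by rw [hPapp]
      _ = (G ^ N) ((hh ^ (-(p - 2))) ((G ^ N) α)) := hkM _
      _ < (G ^ N) α := (G ^ N).strictMono hσα
  have hcancel : (hh ^ (p - 2)) ((hh ^ (-(p - 2))) ((G ^ N) α)) = (G ^ N) α := by
    have e : hh ^ (p - 2) * hh ^ (-(p - 2)) = 1 := by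
      rw [← zpow_add, show (p - 2) + -(p - 2) = 0 from by ring, zpow_zero]
    calc (hh ^ (p - 2)) ((hh ^ (-(p - 2))) ((G ^ N) α))
        = (hh ^ (p - 2) * hh ^ (-(p - 2))) ((G ^ N) α) := rfl
      _ = (G ^ N) α := by rw [e]; rfl
  have key : ∀ m : ℤ, 1 ≤ m → (hh ^ m) ((hh ^ (-(p - 2))) ((G ^ N) α)) < (G ^ N) α := by
    intro m hm
    refine Int.le_induction (motive := fun m _ => (hh ^ m) ((hh ^ (-(p - 2))) ((G ^ N) α)) < (G ^ N) α) ?_ ?_ m hm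
    · show (hh ^ (1:ℤ)) ((hh ^ (-(p - 2))) ((G ^ N) α)) < (G ^ N) α
      rw [zpow_one]
      exact lt_trans (hh.strictMono hσβ) hhβ
    · intro n hn ih
      have e : hh ^ (n + 1) = hh * hh ^ n := by
        rw [show n + 1 = 1 + n from by ring, zpow_one_add]
      calc (hh ^ (n + 1)) ((hh ^ (-(p - 2))) ((G ^ N) α))
          = hh ((hh ^ n) ((hh ^ (-(p - 2))) ((G ^ N) α))) := by rw [e]; rfl
        _ < hh ((G ^ N) α) := hh.strictMono ih
        _ < (G ^ N) α := hhβ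
  exact absurd hcancel (key (p - 2) (by omega)).ne
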